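/- For n = 2, the two-variable identity (∑_{m∈ℤ} q_1^m q^{m^2}) / ∏_{m=1}^∞ (1-q^m)^2 = ∏_{m=1}^∞ (1 + q_1 q^{2m-1})(1 + q_0 q^{2m-2}) / ((1-q^m)(1-q^{2m-1})) holds, where q = q_0 q_1. -/

import Mathlib

open MvPowerSeries Finset
noncomputable section
namespace N2Aux

abbrev R2 : Type := MvPowerSeries (ZMod 2) ℚ
def qq : R2 := X 0 * X 1
def Mon (m : ℤ) : R2 :=
  monomial (Finsupp.single (0 : ZMod 2) (m * m).toNat +
    Finsupp.single (1 : ZMod 2) (m * m + m).toNat) 1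
def E (r : ℕ) : R2 := ∏ j ∈ Icc 1 r, (1 - qq ^ (2*j))
def I (r : ℕ) : R2 := (E r)⁻¹
def OO (r : ℕ) : R2 := ∏ j ∈ Icc 1 r, (1 - qq ^ (2*j-1))
def P1 (B : ℕ) : R2 := ∏ j ∈ Icc 1 B, (1 - qq ^ j)
def bz (N : ℕ) (m : ℤ) : R2 :=
  if m.natAbs ≤ N then E (2*N) * I ((N:ℤ)-m).toNat * I ((N:ℤ)+m).toNat else 0
/-- all coefficients in total degree ≤ n vanish -/
def LZ (n : ℕ) (f : R2) : Prop :=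
  ∀ d : ZMod 2 →₀ ℕ, d 0 + d 1 ≤ n → coeff d f = 0
/-- `g` is `1 + (high order)` -/
def UC (n : ℕ) (g : R2) : Prop := LZ n (g - 1)

lemma mono_congr {d e : ZMod 2 →₀ ℕ} (h : ∀ i, d i = e i) :
    (monomial d 1 : R2) = monomial e 1 := by
  rw [Finsupp.ext h]

lemma cc_one {t : ℕ} (ht : 1 ≤ t) : constantCoeff (1 - qq ^ t) = 1 := by
  obtain ⟨s, rfl⟩ := Nat.exists_eq_add_of_le ht
  simp [qq, pow_add, map_pow, pow_succ]

lemma cc_E (r : ℕ) : constantCoeff (E r) = 1 := by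
  unfold E
  rw [map_prod]
  apply Finset.prod_eq_one
  intro j hj
  exact cc_one (by simp at hj; omega)

lemma E_mul_I (r : ℕ) : E r * I r = 1 := by
  apply MvPowerSeries.mul_inv_cancel
  rw [cc_E]; norm_num

lemma I_mul_E (r : ℕ) : I r * E r = 1 := by rw [mul_comm]; exact E_mul_I r

lemma E_zero : E 0 = 1 := by simp [E]

lemma I_zero : I 0 = 1 := by rw [I, E_zero, inv_one]

lemma E_succ (r : ℕ) : E (r+1) = E r * (1 - qq ^ (2*(r+1))) :=
  Finset.prod_Icc_succ_top (by omega) _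

lemma IE1 (r : ℕ) : I r * E (r+1) = 1 - qq^(2*(r+1)) := by
  rw [E_succ, ← mul_assoc, I_mul_E, one_mul]

lemma IE2 (r : ℕ) : I r * E (r+2) = (1 - qq^(2*(r+1))) * (1 - qq^(2*(r+2))) := by
  rw [show r+2 = (r+1)+1 from rfl, E_succ, ← mul_assoc, IE1]

lemma unit_cancel {u v x y : R2} (huv : u * v = 1) (h : x * u = y * u) : x = y := by
  calc x = x * u * v := by rw [mul_assoc, huv, mul_one]
  _ = y * u * v := by rw [h]
  _ = y := by rw [mul_assoc, huv, mul_one]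



lemma qq_pow_add (s t u : ℕ) (h : s + t = u) : qq^s * qq^t = qq^u := by
  rw [← pow_add, h]

lemma gen (a c : ℕ) :
    E (a+c+4) * I (a+2) * I (c+2)
      = (1 + qq^(2*(a+c+3))) * (E (a+c+2) * I (a+1) * I (c+1))
        + qq^(2*(a+2)) * (E (a+c+2) * I (a+2) * I c)
        + qq^(2*(c+2)) * (E (a+c+2) * I a * I (c+2)) := by
  have huv : (E (a+2) * E (c+2)) * (I (a+2) * I (c+2)) = 1 := by
    rw [mul_mul_mul_comm, E_mul_I, E_mul_I, mul_one]
  apply unit_cancel huv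
  have h1 : E (a+2) * I (a+2) = 1 := E_mul_I _
  have h2 : E (c+2) * I (c+2) = 1 := E_mul_I _
  have h3 : I (a+1) * E (a+2) = 1 - qq^(2*(a+2)) := IE1 (a+1)
  have h4 : I (c+1) * E (c+2) = 1 - qq^(2*(c+2)) := IE1 (c+1)
  have h5 : I a * E (a+2) = (1 - qq^(2*(a+1))) * (1 - qq^(2*(a+2))) := IE2 a
  have h6 : I c * E (c+2) = (1 - qq^(2*(c+1))) * (1 - qq^(2*(c+2))) := IE2 c
  have h7 : E (a+c+4) = E (a+c+2) * (1 - qq^(2*(a+c+3))) * (1 - qq^(2*(a+c+4))) := by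
    rw [show a+c+4 = (a+c+3)+1 from rfl, E_succ, show a+c+3 = (a+c+2)+1 from rfl, E_succ]
  have p1 : qq^(2*(a+2)) * qq^(2*(c+1)) = qq^(2*(a+c+3)) := qq_pow_add _ _ _ (by ring)
  have p2 : qq^(2*(a+1)) * qq^(2*(c+2)) = qq^(2*(a+c+3)) := qq_pow_add _ _ _ (by ring)
  have p3 : qq^(2*(a+2)) * qq^(2*(c+2)) = qq^(2*(a+c+4)) := qq_pow_add _ _ _ (by ring)
  rw [h7]
  set B := E (a+c+2)
  set F3 := qq^(2*(a+c+3))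
  set F4 := qq^(2*(a+c+4))
  set f1 := qq^(2*(a+1))
  set f2 := qq^(2*(a+2))
  set g1 := qq^(2*(c+1))
  set g2 := qq^(2*(c+2))
  linear_combination
    B*(1-F3)*(1-F4)*(E (c+2) * I (c+2))*h1 + B*(1-F3)*(1-F4)*h2
    - (1+F3)*B*((I (c+1) * E (c+2))*h3 + (1-f2)*h4)
    - f2*B*((I c * E (c+2))*h1 + h6)
    - g2*B*((E (c+2) * I (c+2))*h5 + (1-f1)*(1-f2)*h2)
    + B*((1-g2)*p1 + (1-f2)*p2 + (1-F3)*p3)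
end N2Aux
namespace N2Aux
lemma E_one : E 1 = 1 - qq^2 := by
  rw [show (1:ℕ) = 0 + 1 from rfl, E_succ, E_zero, one_mul]

lemma edge1 (r : ℕ) :
    E (2*r+4) * I 1 * I (2*r+3)
      = (1 + qq^(2*(2*r+3))) * (E (2*r+2) * I 0 * I (2*r+2))
        + qq^(2*1) * (E (2*r+2) * I 1 * I (2*r+1)) := by
  have huv : (E 1 * E (2*r+3)) * (I 1 * I (2*r+3)) = 1 := by
    rw [mul_mul_mul_comm, E_mul_I, E_mul_I, mul_one]
  apply unit_cancel huv
  have hA : I 1 * E 1 = 1 := I_mul_E 1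
  have hB : I (2*r+3) * E (2*r+3) = 1 := I_mul_E _
  have hC : I (2*r+2) * E (2*r+3) = 1 - qq^(2*(2*r+3)) := IE1 (2*r+2)
  have hD : I (2*r+1) * E (2*r+3) = (1 - qq^(2*(2*r+2))) * (1 - qq^(2*(2*r+3))) := IE2 (2*r+1)
  have hI0 : I 0 = 1 := I_zero
  have hE1 : E 1 = 1 - qq^2 := E_one
  have h7 : E (2*r+4) = E (2*r+2) * (1 - qq^(2*(2*r+3))) * (1 - qq^(2*(2*r+4))) := by
    rw [show 2*r+4 = (2*r+3)+1 from rfl, E_succ, show 2*r+3 = (2*r+2)+1 from rfl, E_succ]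
  have pA : qq^2 * qq^(2*(2*r+3)) = qq^(2*(2*r+4)) := qq_pow_add _ _ _ (by ring)
  have pB : qq^2 * qq^(2*(2*r+2)) = qq^(2*(2*r+3)) := qq_pow_add _ _ _ (by ring)
  rw [h7]
  set B := E (2*r+2)
  set W := qq^(2*(2*r+3))
  set V := qq^(2*(2*r+2))
  set U := qq^(2*(2*r+4))
  linear_combination
    B*(1-W)*(1-U)*(I (2*r+3) * E (2*r+3))*hA + B*(1-W)*(1-U)*hB
    - (1+W)*B*((I (2*r+2) * E (2*r+3) * E 1)*hI0 + (E 1)*hC + (1-W)*hE1)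
    - qq^(2*1)*B*((I (2*r+1) * E (2*r+3))*hA + hD)
    + B*(1-W)*(pA + pB)


lemma edge0 : E 2 * I 1 * I 1 = 1 + qq^2 := by
  have huv : (E 1 * E 1) * (I 1 * I 1) = 1 := by
    rw [mul_mul_mul_comm, E_mul_I, mul_one]
  apply unit_cancel huv
  have hA : I 1 * E 1 = 1 := I_mul_E 1
  have hE1 : E 1 = 1 - qq^2 := E_one
  have h7 : E 2 = E 1 * (1 - qq^(2*2)) := E_succ 1
  have p : qq^2 * qq^2 = qq^(2*2) := qq_pow_add 2 2 (2*2) (by ring)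
  rw [h7]
  linear_combination (E 1*(1-qq^(2*2))*(I 1 * E 1 + 1))*hA + (1-qq^(2*2))*hE1
    - (1+qq^2)*(E 1 + (1-qq^2))*hE1 + (1-qq^2)*p


lemma bz_out {N : ℕ} {m : ℤ} (h : N < m.natAbs) : bz N m = 0 := by
  rw [bz, if_neg (by omega)]

lemma bz_in {N : ℕ} {m : ℤ} (h : m.natAbs ≤ N) :
    bz N m = E (2*N) * I ((N:ℤ)-m).toNat * I ((N:ℤ)+m).toNat := by
  rw [bz, if_pos h]

lemma bz_neg (N : ℕ) (m : ℤ) : bz N (-m) = bz N m := by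
  unfold bz
  rw [Int.natAbs_neg]
  split
  · rw [sub_neg_eq_add, ← sub_eq_add_neg, mul_right_comm]
  · rfl

lemma bz_diag (N : ℕ) : bz N N = 1 := by
  rw [bz_in (by simp), show ((N:ℤ) - N).toNat = 0 by omega,
    show ((N:ℤ) + N).toNat = 2*N by omega, I_zero, mul_one, E_mul_I]

lemma bzRecNonneg (N : ℕ) (m : ℤ) (hm : 0 ≤ m) :
    bz (N+1) m = (1 + qq^(2*(2*N+1))) * bz N m
      + qq^(2*(((N:ℤ)+1-m).toNat)) * bz N (m-1)
      + qq^(2*(((N:ℤ)+1+m).toNat)) * bz N (m+1) := by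
  rcases lt_or_ge (N:ℤ) m with hbig | hle
  · rcases eq_or_lt_of_le (by omega : (N:ℤ)+1 ≤ m) with heq | hbig2
    · -- m = N+1
      have e1 : bz (N+1) m = 1 := by
        rw [show m = ((N+1:ℕ):ℤ) by push_cast; omega]; exact bz_diag (N+1)
      have e2 : bz N m = 0 := bz_out (by omega)
      have e3 : bz N (m+1) = 0 := bz_out (by omega)
      have e4 : bz N (m-1) = 1 := by
        rw [show m-1 = ((N:ℕ):ℤ) by omega]; exact bz_diag N
      rw [e1, e2, e3, e4, show ((N:ℤ)+1-m).toNat = 0 by omega]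
      ring
    · -- m ≥ N+2 : everything vanishes
      have e1 : bz (N+1) m = 0 := bz_out (by omega)
      have e2 : bz N m = 0 := bz_out (by omega)
      have e3 : bz N (m+1) = 0 := bz_out (by omega)
      have e4 : bz N (m-1) = 0 := bz_out (by omega)
      rw [e1, e2, e3, e4]; ring
  rcases eq_or_lt_of_le hle with heq | hlt
  · -- m = N
    rcases Nat.eq_zero_or_pos N with rfl | hN
    · -- N = 0, m = 0
      have hm0 : m = 0 := by omega
      subst hm0
      have e1 : bz 1 0 = E 2 * I 1 * I 1 := by
        rw [bz_in (by omega)]; norm_num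
      have e2 : bz 0 0 = 1 := by
        have := bz_diag 0; simpa using this
      have e3 : bz 0 (0-1 : ℤ) = 0 := bz_out (by omega)
      have e4 : bz 0 (0+1 : ℤ) = 0 := bz_out (by omega)
      rw [show (0+1 : ℕ) = 1 from rfl, e1, e2, e3, e4]
      norm_num
      exact edge0
    · -- N ≥ 1
      obtain ⟨r, rfl⟩ : ∃ r, N = r + 1 := ⟨N - 1, by omega⟩
      have e1 : bz (r+1+1) m = E (2*r+4) * I 1 * I (2*r+3) := by
        rw [bz_in (by omega), show ((↑(r+1+1):ℤ) - m).toNat = 1 by omega,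
          show ((↑(r+1+1):ℤ) + m).toNat = 2*r+3 by omega, show 2*(r+1+1) = 2*r+4 by omega]
      have e2 : bz (r+1) m = E (2*r+2) * I 0 * I (2*r+2) := by
        rw [bz_in (by omega), show ((↑(r+1):ℤ) - m).toNat = 0 by omega,
          show ((↑(r+1):ℤ) + m).toNat = 2*r+2 by omega, show 2*(r+1) = 2*r+2 by omega]
      have e4 : bz (r+1) (m-1) = E (2*r+2) * I 1 * I (2*r+1) := by
        rw [bz_in (by omega), show ((↑(r+1):ℤ) - (m-1)).toNat = 1 by omega,
          show ((↑(r+1):ℤ) + (m-1)).toNat = 2*r+1 by omega, show 2*(r+1) = 2*r+2 by omega]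
      have e3 : bz (r+1) (m+1) = 0 := bz_out (by omega)
      rw [e1, e2, e3, e4, mul_zero, add_zero,
        show ((↑(r+1):ℤ)+1-m).toNat = 1 by omega,
        show 2*(2*(r+1)+1) = 2*(2*r+3) by omega]
      exact edge1 r
  · -- 0 ≤ m ≤ N - 1 : generic case
    set a := ((N:ℤ)-1-m).toNat with ha
    set c := ((N:ℤ)-1+m).toNat with hc
    have e1 : bz (N+1) m = E (a+c+4) * I (a+2) * I (c+2) := by
      rw [bz_in (by omega), show ((↑(N+1):ℤ) - m).toNat = a+2 by omega,
        show ((↑(N+1):ℤ) + m).toNat = c+2 by omega, show 2*(N+1) = a+c+4 by omega]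
    have e2 : bz N m = E (a+c+2) * I (a+1) * I (c+1) := by
      rw [bz_in (by omega), show ((N:ℤ) - m).toNat = a+1 by omega,
        show ((N:ℤ) + m).toNat = c+1 by omega, show 2*N = a+c+2 by omega]
    have e3 : bz N (m-1) = E (a+c+2) * I (a+2) * I c := by
      rw [bz_in (by omega), show ((N:ℤ) - (m-1)).toNat = a+2 by omega,
        show ((N:ℤ) + (m-1)).toNat = c by omega, show 2*N = a+c+2 by omega]
    have e4 : bz N (m+1) = E (a+c+2) * I a * I (c+2) := by
      rw [bz_in (by omega), show ((N:ℤ) - (m+1)).toNat = a by omega,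
        show ((N:ℤ) + (m+1)).toNat = c+2 by omega, show 2*N = a+c+2 by omega]
    rw [e1, e2, e3, e4, show ((N:ℤ)+1-m).toNat = a+2 by omega,
      show ((N:ℤ)+1+m).toNat = c+2 by omega, show 2*(2*N+1) = 2*(a+c+3) by omega]
    exact gen a c

lemma bzRec (N : ℕ) (m : ℤ) :
    bz (N+1) m = (1 + qq^(2*(2*N+1))) * bz N m
      + qq^(2*(((N:ℤ)+1-m).toNat)) * bz N (m-1)
      + qq^(2*(((N:ℤ)+1+m).toNat)) * bz N (m+1) := by
  rcases le_or_gt 0 m with hm | hm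
  · exact bzRecNonneg N m hm
  · have h := bzRecNonneg N (-m) (by omega)
    rw [bz_neg, bz_neg, show -m - 1 = -(m+1) by ring, bz_neg,
      show -m + 1 = -(m-1) by ring, bz_neg,
      show ((N:ℤ)+1-(-m)).toNat = ((N:ℤ)+1+m).toNat by omega,
      show ((N:ℤ)+1+(-m)).toNat = ((N:ℤ)+1-m).toNat by omega] at h
    linear_combination h


lemma qq_pow (t : ℕ) : qq ^ t =
    monomial (Finsupp.single (0 : ZMod 2) t + Finsupp.single (1 : ZMod 2) t) 1 := by
  rw [qq, mul_pow, X_pow_eq, X_pow_eq, monomial_mul_monomial, one_mul]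

lemma Mon_up (N : ℕ) (m : ℤ) (h1 : -(N:ℤ) ≤ m) (h2 : m ≤ N) :
    X 1 * qq^(2*N+1) * Mon m = qq^(2*((N:ℤ)-m).toNat) * Mon (m+1) := by
  rw [Mon, Mon, qq_pow, qq_pow, X, monomial_mul_monomial, monomial_mul_monomial,
    monomial_mul_monomial, one_mul, one_mul]
  apply mono_congr
  intro i
  have hsq : (m+1)*(m+1) = m*m + (2*m+1) := by ring
  have h0 : 0 ≤ m*m := mul_self_nonneg m
  have h0' : 0 ≤ m*m + m := by nlinarith [mul_self_nonneg (m+1)]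
  have hp : 0 ≤ m*m + (2*m+1) := by nlinarith [mul_self_nonneg (m+1)]
  have hq : 0 ≤ m*m + (2*m+1) + (m+1) := by nlinarith [mul_self_nonneg (m+1), mul_self_nonneg (m+2)]
  rw [hsq]
  generalize m*m = s at h0 h0' hp hq ⊢
  rcases (show i = 0 ∨ i = 1 by fin_cases i; exacts [Or.inl rfl, Or.inr rfl]) with rfl | rfl <;>
    simp [Finsupp.single_apply, Finsupp.add_apply] <;> omega

lemma Mon_down (N : ℕ) (m : ℤ) (h1 : -(N:ℤ) ≤ m) (h2 : m ≤ N) :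
    X 0 * qq^(2*N) * Mon m = qq^(2*((N:ℤ)+m).toNat) * Mon (m-1) := by
  rw [Mon, Mon, qq_pow, qq_pow, X, monomial_mul_monomial, monomial_mul_monomial,
    monomial_mul_monomial, one_mul, one_mul]
  apply mono_congr
  intro i
  have hsq : (m-1)*(m-1) = m*m - (2*m-1) := by ring
  have h0 : 0 ≤ m*m := mul_self_nonneg m
  have h0' : 0 ≤ m*m + m := by nlinarith [mul_self_nonneg (m+1)]
  have h0'' : 0 ≤ m*m - m := by nlinarith [mul_self_nonneg (m-1)]
  have hp : 0 ≤ m*m - (2*m-1) := by nlinarith [mul_self_nonneg (m-1)]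
  have hq : 0 ≤ m*m - (2*m-1) + (m-1) := by nlinarith [mul_self_nonneg (m-1)]
  rw [hsq]
  generalize m*m = s at h0 h0' h0'' hp hq ⊢
  rcases (show i = 0 ∨ i = 1 by fin_cases i; exacts [Or.inl rfl, Or.inr rfl]) with rfl | rfl <;>
    simp [Finsupp.single_apply, Finsupp.add_apply] <;> omega

lemma Mon_zero : Mon 0 = 1 := by
  rw [Mon]
  norm_num


theorem JTP (N : ℕ) :
    ∏ j ∈ Icc 1 N, ((1 + X 1 * qq^(2*j-1)) * (1 + X 0 * qq^(2*j-2)))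
      = ∑ m ∈ Icc (-(N:ℤ)) (N:ℤ), bz N m * Mon m := by
  induction N with
  | zero =>
    simp only [Nat.cast_zero, neg_zero, Icc_self, sum_singleton]
    have hb : bz 0 0 = 1 := by have := bz_diag 0; simpa using this
    rw [hb, Mon_zero, one_mul]
    simp
  | succ N ih =>
    rw [Finset.prod_Icc_succ_top (by omega), ih]
    rw [show 2*(N+1)-1 = 2*N+1 by omega, show 2*(N+1)-2 = 2*N by omega]
    have hAC : (X 1 * qq^(2*N+1)) * (X 0 * qq^(2*N)) = qq^(2*(2*N+1)) := by
      rw [mul_mul_mul_comm, mul_comm (X 1) (X 0), qq_pow_add _ _ _ (by ring : (2*N+1) + 2*N = 4*N+1)]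
      rw [← qq, show (qq : R2) * qq^(4*N+1) = qq^(4*N+1+1) from (pow_succ' qq _).symm]
      norm_num
      rw [show 2*(2*N+1) = 4*N+2 by ring]
    have hexp : (1 + X 1 * qq^(2*N+1)) * (1 + X 0 * qq^(2*N))
        = 1 + qq^(2*(2*N+1)) + X 1 * qq^(2*N+1) + X 0 * qq^(2*N) := by
      rw [← hAC]; ring
    rw [hexp, Finset.sum_mul]
    -- termwise expansion
    have hterm : ∀ m ∈ Icc (-(N:ℤ)) (N:ℤ),
        bz N m * Mon m * (1 + qq^(2*(2*N+1)) + X 1 * qq^(2*N+1) + X 0 * qq^(2*N))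
        = (1 + qq^(2*(2*N+1))) * (bz N m * Mon m)
          + qq^(2*((N:ℤ)-m).toNat) * (bz N m * Mon (m+1))
          + qq^(2*((N:ℤ)+m).toNat) * (bz N m * Mon (m-1)) := by
      intro m hm
      simp only [mem_Icc] at hm
      have e1 := Mon_up N m hm.1 hm.2
      have e2 := Mon_down N m hm.1 hm.2
      calc bz N m * Mon m * (1 + qq^(2*(2*N+1)) + X 1 * qq^(2*N+1) + X 0 * qq^(2*N))
          = (1 + qq^(2*(2*N+1))) * (bz N m * Mon m)
            + bz N m * (X 1 * qq^(2*N+1) * Mon m)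
            + bz N m * (X 0 * qq^(2*N) * Mon m) := by ring
        _ = _ := by rw [e1, e2]; ring
    rw [Finset.sum_congr rfl hterm]
    rw [Finset.sum_add_distrib, Finset.sum_add_distrib]
    -- Now handle the three sums
    have key : ∀ m' : ℤ, m' ∈ Icc (-((N:ℤ)+1)) ((N:ℤ)+1) →
        bz (N+1) m' * Mon m' =
          (1 + qq^(2*(2*N+1))) * (bz N m' * Mon m')
          + qq^(2*(((N:ℤ)+1-m').toNat)) * (bz N (m'-1) * Mon m')
          + qq^(2*(((N:ℤ)+1+m').toNat)) * (bz N (m'+1) * Mon m') := by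
      intro m' _
      rw [bzRec N m']; ring
    -- sum 1
    have s1 : ∑ m ∈ Icc (-(N:ℤ)) (N:ℤ), (1 + qq^(2*(2*N+1))) * (bz N m * Mon m)
        = ∑ m ∈ Icc (-((N:ℤ)+1)) ((N:ℤ)+1), (1 + qq^(2*(2*N+1))) * (bz N m * Mon m) := by
      apply Finset.sum_subset
      · intro x hx; simp only [mem_Icc] at *; omega
      · intro x hx hnx
        simp only [mem_Icc] at hx hnx
        rw [bz_out (by omega)]; ring
    have sum_shift : ∀ (f : ℤ → R2) (a b c : ℤ),
        ∑ m ∈ Icc a b, f (m + c) = ∑ m ∈ Icc (a+c) (b+c), f m := by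
      intro f a b c
      rw [← Finset.map_add_right_Icc, Finset.sum_map]
      rfl
    -- sum 2 : shift up
    have s2 : ∑ m ∈ Icc (-(N:ℤ)) (N:ℤ), qq^(2*((N:ℤ)-m).toNat) * (bz N m * Mon (m+1))
        = ∑ m ∈ Icc (-((N:ℤ)+1)) ((N:ℤ)+1), qq^(2*(((N:ℤ)+1-m).toNat)) * (bz N (m-1) * Mon m) := by
      calc ∑ m ∈ Icc (-(N:ℤ)) (N:ℤ), qq^(2*((N:ℤ)-m).toNat) * (bz N m * Mon (m+1))
          = ∑ m ∈ Icc (-(N:ℤ)) (N:ℤ),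
              (fun m' => qq^(2*(((N:ℤ)+1-m').toNat)) * (bz N (m'-1) * Mon m')) (m + 1) :=
            Finset.sum_congr rfl (by
              intro m hm
              simp only []
              rw [show (N:ℤ)+1-(m+1) = (N:ℤ)-m by ring, show m+1-1 = m by ring])
        _ = ∑ m ∈ Icc (-(N:ℤ)+1) ((N:ℤ)+1),
              (fun m' => qq^(2*(((N:ℤ)+1-m').toNat)) * (bz N (m'-1) * Mon m')) m :=
            sum_shift (fun m' => qq^(2*(((N:ℤ)+1-m').toNat)) * (bz N (m'-1) * Mon m')) (-(N:ℤ)) (N:ℤ) 1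
        _ = ∑ m ∈ Icc (-((N:ℤ)+1)) ((N:ℤ)+1), qq^(2*(((N:ℤ)+1-m).toNat)) * (bz N (m-1) * Mon m) := by
            apply Finset.sum_subset
            · intro x hx; simp only [mem_Icc] at *; omega
            · intro x hx hnx
              simp only [mem_Icc] at hx hnx
              rw [bz_out (by omega)]; ring
    -- sum 3 : shift down
    have s3 : ∑ m ∈ Icc (-(N:ℤ)) (N:ℤ), qq^(2*((N:ℤ)+m).toNat) * (bz N m * Mon (m-1))
        = ∑ m ∈ Icc (-((N:ℤ)+1)) ((N:ℤ)+1), qq^(2*(((N:ℤ)+1+m).toNat)) * (bz N (m+1) * Mon m) := by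
      calc ∑ m ∈ Icc (-(N:ℤ)) (N:ℤ), qq^(2*((N:ℤ)+m).toNat) * (bz N m * Mon (m-1))
          = ∑ m ∈ Icc (-(N:ℤ)) (N:ℤ),
              (fun m' => qq^(2*(((N:ℤ)+1+m').toNat)) * (bz N (m'+1) * Mon m')) (m + (-1)) :=
            Finset.sum_congr rfl (by
              intro m hm
              simp only []
              rw [show m+(-1)+1 = m by ring, show m + (-1) = m - 1 by ring,
                show (N:ℤ)+1+(m-1) = (N:ℤ)+m by ring])
        _ = ∑ m ∈ Icc (-(N:ℤ)+(-1)) ((N:ℤ)+(-1)),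
              (fun m' => qq^(2*(((N:ℤ)+1+m').toNat)) * (bz N (m'+1) * Mon m')) m :=
            sum_shift (fun m' => qq^(2*(((N:ℤ)+1+m').toNat)) * (bz N (m'+1) * Mon m')) (-(N:ℤ)) (N:ℤ) (-1)
        _ = ∑ m ∈ Icc (-((N:ℤ)+1)) ((N:ℤ)+1), qq^(2*(((N:ℤ)+1+m).toNat)) * (bz N (m+1) * Mon m) := by
            apply Finset.sum_subset
            · intro x hx; simp only [mem_Icc] at *; omega
            · intro x hx hnx
              simp only [mem_Icc] at hx hnx
              rw [bz_out (by omega)]; ring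
    rw [s1, s2, s3, ← Finset.sum_add_distrib, ← Finset.sum_add_distrib]
    push_cast
    exact (Finset.sum_congr rfl key).symm


/-- all coefficients in total degree ≤ n vanish -/
lemma LZ.mul_left {n : ℕ} {f : R2} (h : LZ n f) (g : R2) : LZ n (g * f) := by
  intro d hd
  rw [coeff_mul]
  apply Finset.sum_eq_zero
  rintro ⟨d1, d2⟩ hmem
  rw [Finset.HasAntidiagonal.mem_antidiagonal] at hmem
  have h0 : d1 0 + d2 0 = d 0 := by rw [← hmem]; simp
  have h1 : d1 1 + d2 1 = d 1 := by rw [← hmem]; simp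
  rw [h d2 (by omega), mul_zero]

lemma LZ.neg {n : ℕ} {f : R2} (h : LZ n f) : LZ n (-f) := by
  intro d hd; rw [map_neg, h d hd, neg_zero]

lemma LZ.add {n : ℕ} {f g : R2} (h : LZ n f) (h' : LZ n g) : LZ n (f + g) := by
  intro d hd; rw [map_add, h d hd, h' d hd, add_zero]

lemma LZ_qq_pow {n t : ℕ} (h : n < 2*t) : LZ n (qq ^ t) := by
  intro d hd
  rw [qq_pow, coeff_monomial]
  split
  · next heq =>
    exfalso
    have e0 : d 0 = t := by rw [heq]; simp
    have e1 : d 1 = t := by rw [heq]; simp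
    omega
  · rfl

lemma LZ.mul_right {n : ℕ} {f : R2} (h : LZ n f) (g : R2) : LZ n (f * g) := by
  rw [mul_comm]; exact h.mul_left g

/-- `g` is `1 + (high order)` -/
lemma UC.one (n : ℕ) : UC n 1 := by
  intro d hd; simp

lemma UC.mul {n : ℕ} {g h : R2} (hg : UC n g) (hh : UC n h) : UC n (g * h) := by
  have : g * h - 1 = g * (h - 1) + (g - 1) := by ring
  rw [UC, this]
  exact (hh.mul_left g).add hg

lemma UC.prod {n : ℕ} {α : Type} (s : Finset α) (f : α → R2)
    (h : ∀ i ∈ s, UC n (f i)) : UC n (∏ i ∈ s, f i) :=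
  Finset.prod_induction f (UC n) (fun _ _ => UC.mul) (UC.one n) h

lemma UC.inv {n : ℕ} {g g' : R2} (hgg : g * g' = 1) (hg : UC n g) : UC n g' := by
  have : g' - 1 = -((g - 1) * g') := by linear_combination hgg
  rw [UC, this]
  exact (hg.mul_right g').neg

lemma UC.one_sub {n t : ℕ} (h : n < t) : UC n (1 - qq ^ t) := by
  have : (1 - qq^t) - 1 = -(qq^t) := by ring
  rw [UC, this]
  exact (LZ_qq_pow (by omega)).neg

lemma prod_split (f : ℕ → R2) {a b : ℕ} (h : a ≤ b) :
    ∏ j ∈ Icc 1 b, f j = (∏ j ∈ Icc 1 a, f j) * ∏ j ∈ Ioc a b, f j := by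
  rw [show (1:ℕ) = 0 + 1 from rfl, Finset.Icc_add_one_left_eq_Ioc, Finset.Icc_add_one_left_eq_Ioc,
    Finset.prod_Ioc_consecutive f (Nat.zero_le a) h]

lemma E_split {a b : ℕ} (h : a ≤ b) :
    E b = E a * ∏ j ∈ Ioc a b, (1 - qq ^ (2*j)) := prod_split _ h

lemma OO_split {a b : ℕ} (h : a ≤ b) :
    OO b = OO a * ∏ j ∈ Ioc a b, (1 - qq ^ (2*j-1)) := prod_split _ h

lemma OO_succ (r : ℕ) : OO (r+1) = OO r * (1 - qq ^ (2*(r+1)-1)) :=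
  Finset.prod_Icc_succ_top (by omega) _

lemma P1_split (B : ℕ) : P1 B = E (B/2) * OO ((B+1)/2) := by
  induction B with
  | zero => simp [P1, E, OO]
  | succ B ih =>
    rw [P1, Finset.prod_Icc_succ_top (by omega), ← P1]
    rcases Nat.even_or_odd B with ⟨c, hc⟩ | ⟨c, hc⟩
    · subst hc
      rw [show (c+c+1)/2 = c by omega, show (c+c+1+1)/2 = c+1 by omega,
        ih, show (c+c)/2 = c by omega, show (c+c+1)/2 = c by omega,
        OO_succ, show 2*(c+1)-1 = c+c+1 by omega]
      ring
    · subst hc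
      rw [show (2*c+1+1)/2 = c+1 by omega, show (2*c+1+1+1)/2 = c+1 by omega,
        ih, show (2*c+1)/2 = c by omega, show (2*c+1+1)/2 = c+1 by omega,
        E_succ, show 2*(c+1) = 2*c+1+1 by omega]
      ring


lemma inv_prod_cancel {B : ℕ} (f : ℕ → R2) (h : ∀ j ∈ Icc 1 B, constantCoeff (f j) ≠ 0) :
    (∏ j ∈ Icc 1 B, (f j)⁻¹) * (∏ j ∈ Icc 1 B, f j) = 1 := by
  rw [← Finset.prod_mul_distrib]
  apply Finset.prod_eq_one
  intro j hj
  exact MvPowerSeries.inv_mul_cancel _ (h j hj)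

lemma tail {D B : ℕ} {m : ℤ} (hm : m.natAbs ≤ D) (hB : 4*D + 8 ≤ B) :
    LZ D ((∏ t ∈ Icc 1 B, (1 - qq^t)⁻¹)
      - bz B m * ∏ t ∈ Icc 1 B, (1 - qq^(2*t-1))⁻¹) := by
  set T := ∏ t ∈ Icc 1 B, (1 - qq^t)⁻¹ with hT
  set S := ∏ t ∈ Icc 1 B, (1 - qq^(2*t-1))⁻¹ with hS
  have hTP : T * P1 B = 1 :=
    inv_prod_cancel _ (fun j hj => by rw [cc_one (by simp at hj; omega)]; norm_num)
  have hSO : S * OO B = 1 :=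
    inv_prod_cancel _ (fun j hj => by rw [cc_one (by simp at hj; omega)]; norm_num)
  have key : T - bz B m * S = T * (1 - P1 B * (bz B m * S)) := by
    rw [mul_sub, mul_one, ← mul_assoc, hTP, one_mul]
  rw [key]
  apply LZ.mul_left
  -- show UC D (P1 B * (bz B m * S))
  set rm := ((B:ℤ) - m).toNat with hrm
  set rp := ((B:ℤ) + m).toNat with hrp
  have hUC : UC D (P1 B * (bz B m * S)) := by
    have split : P1 B * (bz B m * S)
        = (E (2*B) * I rm) * ((E (B/2) * I rp) * (OO ((B+1)/2) * S)) := by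
      rw [P1_split, bz_in (by omega)]
      ring
    rw [split]
    have u1 : UC D (E (2*B) * I rm) := by
      have e : E (2*B) * I rm = ∏ j ∈ Ioc rm (2*B), (1 - qq ^ (2*j)) := by
        rw [E_split (show rm ≤ 2*B by omega)]
        rw [mul_right_comm, E_mul_I, one_mul]
      rw [e]
      apply UC.prod
      intro j hj
      simp only [mem_Ioc] at hj
      exact UC.one_sub (by omega)
    have u2 : UC D (E (B/2) * I rp) := by
      have hle : B/2 ≤ rp := by omega
      have e : (E (B/2) * I rp) * (∏ j ∈ Ioc (B/2) rp, (1 - qq ^ (2*j))) = 1 := by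
        rw [mul_right_comm, ← E_split hle, E_mul_I]
      have ug : UC D (∏ j ∈ Ioc (B/2) rp, (1 - qq ^ (2*j))) := by
        apply UC.prod
        intro j hj
        simp only [mem_Ioc] at hj
        exact UC.one_sub (by omega)
      exact UC.inv (by rw [mul_comm]; exact e) ug
    have u3 : UC D (OO ((B+1)/2) * S) := by
      have hle : (B+1)/2 ≤ B := by omega
      have e : (OO ((B+1)/2) * S) * (∏ j ∈ Ioc ((B+1)/2) B, (1 - qq ^ (2*j-1))) = 1 := by
        rw [mul_right_comm, ← OO_split hle, mul_comm, hSO]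
      have ug : UC D (∏ j ∈ Ioc ((B+1)/2) B, (1 - qq ^ (2*j-1))) := by
        apply UC.prod
        intro j hj
        simp only [mem_Ioc] at hj
        exact UC.one_sub (by omega)
      exact UC.inv (by rw [mul_comm]; exact e) ug
    exact u1.mul (u2.mul u3)
  have : (1 : R2) - P1 B * (bz B m * S) = -((P1 B * (bz B m * S)) - 1) := by ring
  rw [this]
  exact hUC.neg

lemma monKill {k : ZMod 2 →₀ ℕ} {m : ℤ} (h : (k 0 : ℤ) < m*m) (g : R2) :
    coeff k (Mon m * g) = 0 := by
  rw [coeff_mul]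
  apply Finset.sum_eq_zero
  rintro ⟨d1, d2⟩ hmem
  rw [Finset.HasAntidiagonal.mem_antidiagonal] at hmem
  have h0 : d1 0 + d2 0 = k 0 := by rw [← hmem]; simp
  rw [Mon, coeff_monomial]
  split
  · next heq =>
    exfalso
    have e0 : d1 0 = (m*m).toNat := by rw [show d1 = (d1,d2).1 from rfl, heq]; simp
    omega
  · rw [zero_mul]

end N2Aux
end

open N2Aux in
theorem n2_theta_identity (k : ZMod 2 →₀ ℕ) :
    ∃ B0 : ℕ, ∀ B ≥ B0,
      MvPowerSeries.coeff (R := ℚ) k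
        ((∑ m ∈ Finset.Icc (-(B : ℤ)) (B : ℤ),
            MvPowerSeries.monomial (R := ℚ)
              (Finsupp.single (0 : ZMod 2) (m * m).toNat +
                Finsupp.single (1 : ZMod 2) (m * m + m).toNat) 1) *
          (∏ t ∈ Finset.Icc 1 B,
            (1 - (MvPowerSeries.X (0 : ZMod 2) * MvPowerSeries.X (1 : ZMod 2)) ^ t)⁻¹) ^ 2)
      = MvPowerSeries.coeff (R := ℚ) k
          (∏ m ∈ Finset.Icc 1 B,
            ((1 + MvPowerSeries.X (1 : ZMod 2) *
                (MvPowerSeries.X (0 : ZMod 2) * MvPowerSeries.X (1 : ZMod 2)) ^ (2 * m - 1)) *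
             (1 + MvPowerSeries.X (0 : ZMod 2) *
                (MvPowerSeries.X (0 : ZMod 2) * MvPowerSeries.X (1 : ZMod 2)) ^ (2 * m - 2)) *
             (1 - (MvPowerSeries.X (0 : ZMod 2) * MvPowerSeries.X (1 : ZMod 2)) ^ m)⁻¹ *
             (1 - (MvPowerSeries.X (0 : ZMod 2) * MvPowerSeries.X (1 : ZMod 2)) ^ (2 * m - 1))⁻¹)) := by
  refine ⟨4*(k 0 + k 1) + 8, ?_⟩
  intro B hB
  show MvPowerSeries.coeff k
        ((∑ m ∈ Finset.Icc (-(B : ℤ)) (B : ℤ), Mon m) *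
          (∏ t ∈ Finset.Icc 1 B, (1 - qq ^ t)⁻¹) ^ 2)
      = MvPowerSeries.coeff k
          (∏ j ∈ Finset.Icc 1 B,
            ((1 + X 1 * qq ^ (2*j-1)) * (1 + X 0 * qq ^ (2*j-2)) *
              (1 - qq ^ j)⁻¹ * (1 - qq ^ (2*j-1))⁻¹))
  set D := k 0 + k 1 with hD
  set T := ∏ t ∈ Finset.Icc 1 B, (1 - qq^t)⁻¹ with hT
  set S := ∏ t ∈ Finset.Icc 1 B, (1 - qq^(2*t-1))⁻¹ with hS
  rw [Finset.prod_mul_distrib, Finset.prod_mul_distrib, JTP B]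
  have eL : (∑ m ∈ Finset.Icc (-(B:ℤ)) (B:ℤ), Mon m) * T^2
      = ∑ m ∈ Finset.Icc (-(B:ℤ)) (B:ℤ), Mon m * (T*T) := by
    rw [sq, Finset.sum_mul]
  have eR : ((∑ m ∈ Finset.Icc (-(B:ℤ)) (B:ℤ), bz B m * Mon m) * T) * S
      = ∑ m ∈ Finset.Icc (-(B:ℤ)) (B:ℤ), bz B m * Mon m * T * S := by
    rw [Finset.sum_mul, Finset.sum_mul]
  rw [eL, eR, map_sum, map_sum]
  apply Finset.sum_congr rfl
  intro m hm
  rcases le_or_gt m.natAbs D with hsm | hbig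
  · rw [← sub_eq_zero, ← map_sub]
    have e : Mon m * (T*T) - bz B m * Mon m * T * S = (Mon m * T) * (T - bz B m * S) := by
      ring
    rw [e]
    exact ((tail hsm hB).mul_left (Mon m * T)) k (le_refl D)
  · have hmm : (k 0 : ℤ) < m*m := by
      have h1 : (↑(m.natAbs * m.natAbs) : ℤ) = m * m := Int.natAbs_mul_self
      have h2 : m.natAbs ≤ m.natAbs * m.natAbs := Nat.le_mul_of_pos_left _ (by omega)
      omega
    have h1 : coeff k (Mon m * (T*T)) = 0 := monKill hmm _
    have h2 : coeff k (bz B m * Mon m * T * S) = 0 := by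
      rw [show bz B m * Mon m * T * S = Mon m * (bz B m * T * S) by ring]
      exact monKill hmm _
    rw [h1, h2]
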